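/- Fix b ∈ ℝ and s > 0. Then lim_{t → +∞} ∫₀^s ψ_{s+t}(y) dy = (|b|/√(2π)) · ∫₀^s e^{−b²y/2}/√y dy = 2Φ(|b|√s) − 1. (In particular the limit is 0 when b = 0 and is strictly positive when b ≠ 0.) -/

import Mathlib

open Real MeasureTheory Set Filter

/-- Standard Gaussian density φ(z) = (1/√(2π)) e^{−z²/2}. -/
noncomputable def gaussPdf (z : ℝ) : ℝ := (1 / Real.sqrt (2 * π)) * Real.exp (-z ^ 2 / 2)

/-- Standard Gaussian distribution function Φ(y) = ∫_{−∞}^y φ(z) dz. -/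
noncomputable def gaussCdf (y : ℝ) : ℝ := ∫ z in Set.Iio y, gaussPdf z

/-- ψ_t(u) = (e^{−b²u/2}/(π√(u(t−u)))) · [ e^{−b²(t−u)/2}
      + (b/2)·√(2π(t−u)) · (2Φ(b√(t−u)) − 1) ]. -/
noncomputable def psi (b t u : ℝ) : ℝ :=
  (Real.exp (-b ^ 2 * u / 2) / (π * Real.sqrt (u * (t - u)))) *
    (Real.exp (-b ^ 2 * (t - u) / 2) +
      (b / 2) * Real.sqrt (2 * π * (t - u)) *
        (2 * gaussCdf (b * Real.sqrt (t - u)) - 1))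

/-- Inverse Gaussian first-passage density f_{τ₁}(t) = (|a−x|/t^{3/2}) φ((a+bt−x)/√t). -/
noncomputable def invGaussPdf (a x b t : ℝ) : ℝ :=
  (|a - x| / t ^ ((3 : ℝ) / 2)) * gaussPdf ((a + b * t - x) / Real.sqrt t)

lemma gaussPdf_cont : Continuous gaussPdf := by
  unfold gaussPdf; fun_prop

lemma gaussPdf_nonneg (z : ℝ) : 0 ≤ gaussPdf z := by
  unfold gaussPdf
  positivity

lemma gaussPdf_integrable : Integrable gaussPdf := by
  have h : Integrable (fun z : ℝ => Real.exp (-(1/2) * z ^ 2)) := integrable_exp_neg_mul_sq (by norm_num)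
  have := h.const_mul (1 / Real.sqrt (2 * π))
  refine this.congr (Eventually.of_forall fun z => ?_)
  unfold gaussPdf; ring_nf

lemma integral_gaussPdf : ∫ z, gaussPdf z = 1 := by
  unfold gaussPdf
  rw [MeasureTheory.integral_const_mul]
  have : ∀ z : ℝ, Real.exp (-z ^ 2 / 2) = Real.exp (-(1/2) * z ^ 2) := by intro z; ring_nf
  simp_rw [this]
  rw [integral_gaussian]
  have h2 : Real.sqrt (π / (1/2)) = Real.sqrt (2 * π) := by norm_num [mul_comm]
  rw [h2]
  rw [one_div, inv_mul_cancel₀ (by positivity : Real.sqrt (2*π) ≠ 0)]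

lemma gaussCdf_add_gaussCdf_neg (y : ℝ) : gaussCdf y + gaussCdf (-y) = 1 := by
  have heven : ∀ z : ℝ, gaussPdf (-z) = gaussPdf z := by
    intro z; unfold gaussPdf; rw [neg_pow]; ring_nf
  have h1 : gaussCdf (-y) = ∫ z in Ioi y, gaussPdf z := by
    unfold gaussCdf
    rw [← MeasureTheory.integral_Iic_eq_integral_Iio]
    have h := integral_comp_neg_Iic (-y) gaussPdf
    simp_rw [heven, neg_neg] at h
    exact h
  have h2 : gaussCdf y = ∫ z in Iic y, gaussPdf z := by
    unfold gaussCdf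
    rw [MeasureTheory.integral_Iic_eq_integral_Iio]
  rw [h1, h2, intervalIntegral.integral_Iic_add_Ioi (gaussPdf_integrable.integrableOn)
    (gaussPdf_integrable.integrableOn), integral_gaussPdf]

lemma gaussCdf_zero : gaussCdf 0 = 1 / 2 := by
  have := gaussCdf_add_gaussCdf_neg 0
  rw [neg_zero] at this; linarith

lemma gaussCdf_nonneg (y : ℝ) : 0 ≤ gaussCdf y :=
  MeasureTheory.setIntegral_nonneg measurableSet_Iio fun z _ => gaussPdf_nonneg z

lemma gaussCdf_le_one (y : ℝ) : gaussCdf y ≤ 1 := by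
  have := gaussCdf_add_gaussCdf_neg y
  have := gaussCdf_nonneg (-y)
  linarith

lemma gaussCdf_eq (y : ℝ) : gaussCdf y = gaussCdf 0 + ∫ z in (0:ℝ)..y, gaussPdf z := by
  unfold gaussCdf
  rw [← MeasureTheory.integral_Iic_eq_integral_Iio, ← MeasureTheory.integral_Iic_eq_integral_Iio,
    ← intervalIntegral.integral_Iic_sub_Iic gaussPdf_integrable.integrableOn
      gaussPdf_integrable.integrableOn]
  ring

lemma gaussCdf_hasDerivAt (x : ℝ) : HasDerivAt gaussCdf (gaussPdf x) x := by
  have h : HasDerivAt (fun y => gaussCdf 0 + ∫ z in (0:ℝ)..y, gaussPdf z) (gaussPdf x) x := by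
    refine HasDerivAt.const_add _ ?_
    exact intervalIntegral.integral_hasDerivAt_right
      (gaussPdf_integrable.intervalIntegrable)
      (gaussPdf_cont.stronglyMeasurableAtFilter _ _) gaussPdf_cont.continuousAt
  exact h.congr_of_eventuallyEq (Eventually.of_forall fun y => gaussCdf_eq y)

lemma gaussCdf_cont : Continuous gaussCdf := by
  have : ∀ x, HasDerivAt gaussCdf (gaussPdf x) x := gaussCdf_hasDerivAt
  exact continuous_iff_continuousAt.2 fun x => (this x).continuousAt

lemma gaussCdf_tendsto_atTop : Tendsto gaussCdf atTop (nhds 1) := by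
  rw [← integral_gaussPdf]
  exact (MeasureTheory.aecover_Iio tendsto_id).integral_tendsto_of_countably_generated
    gaussPdf_integrable

lemma gaussCdf_tendsto_atBot : Tendsto gaussCdf atBot (nhds 0) := by
  have h : Tendsto (fun y => 1 - gaussCdf (-y)) atBot (nhds 0) := by
    have := gaussCdf_tendsto_atTop.comp (tendsto_neg_atBot_atTop)
    have h2 : Tendsto (fun y : ℝ => 1 - gaussCdf (-y)) atBot (nhds (1 - 1)) :=
      tendsto_const_nhds.sub this
    simpa using h2
  refine h.congr fun y => ?_
  have := gaussCdf_add_gaussCdf_neg y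
  linarith

lemma gauss_integrand_intervalIntegrable (b : ℝ) {u v : ℝ} (hu : 0 ≤ u) (hv : 0 ≤ v) :
    IntervalIntegrable (fun y => Real.exp (-b ^ 2 * y / 2) / Real.sqrt y) volume u v := by
  refine IntervalIntegrable.mono_fun' (g := fun y => y ^ (-(1:ℝ)/2))
    (intervalIntegral.intervalIntegrable_rpow' (by norm_num)) ?_ ?_
  · apply Measurable.aestronglyMeasurable
    fun_prop
  · refine (ae_restrict_iff' measurableSet_uIoc).2 (Eventually.of_forall fun y hy => ?_)
    have hy0 : 0 < y := lt_of_le_of_lt (le_min hu hv) hy.1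
    have h1 : Real.exp (-b ^ 2 * y / 2) ≤ 1 := by
      rw [Real.exp_le_one_iff]; nlinarith [sq_nonneg b]
    have h2 : y ^ ((-1 : ℝ)/2) = 1 / Real.sqrt y := by
      rw [Real.sqrt_eq_rpow, one_div, ← Real.rpow_neg hy0.le]
      norm_num
    simp only [Real.norm_eq_abs, abs_div, abs_of_nonneg (Real.exp_nonneg _),
      abs_of_nonneg (Real.sqrt_nonneg _), h2]
    gcongr

lemma part2 (b s : ℝ) (hs : 0 < s) :
    (|b| / Real.sqrt (2 * π)) * (∫ y in (0:ℝ)..s, Real.exp (-b ^ 2 * y / 2) / Real.sqrt y)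
      = 2 * gaussCdf (|b| * Real.sqrt s) - 1 := by
  rcases eq_or_ne b 0 with hb | hb
  · simp [hb, gaussCdf_zero]
  have hc : 0 < |b| := abs_pos.2 hb
  set c := |b| with hcdef
  set F : ℝ → ℝ := fun y => (2 * Real.sqrt (2 * π) / c) * gaussCdf (c * Real.sqrt y) with hF
  have hsqrt2pi : (0:ℝ) < Real.sqrt (2 * π) := Real.sqrt_pos.2 (by positivity)
  have hFd : ∀ y : ℝ, 0 < y → HasDerivAt F (Real.exp (-b ^ 2 * y / 2) / Real.sqrt y) y := by
    intro y hy
    have h1 : HasDerivAt (fun y => c * Real.sqrt y) (c * (1 / (2 * Real.sqrt y))) y :=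
      (Real.hasDerivAt_sqrt hy.ne').const_mul c
    have h2 : HasDerivAt (fun y => gaussCdf (c * Real.sqrt y))
        (gaussPdf (c * Real.sqrt y) * (c * (1 / (2 * Real.sqrt y)))) y :=
      by have := (gaussCdf_hasDerivAt (c * Real.sqrt y)).comp y h1; exact this
    have h3 := h2.const_mul (2 * Real.sqrt (2 * π) / c)
    refine h3.congr_deriv ?_; symm
    have hsy : (0:ℝ) < Real.sqrt y := Real.sqrt_pos.2 hy
    unfold gaussPdf
    have hsq : (c * Real.sqrt y) ^ 2 = b ^ 2 * y := by
      rw [mul_pow, Real.sq_sqrt hy.le, hcdef, sq_abs]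
    rw [hsq]
    field_simp
  have hint : IntervalIntegrable (fun y => Real.exp (-b ^ 2 * y / 2) / Real.sqrt y)
      volume 0 s := gauss_integrand_intervalIntegrable b le_rfl hs.le
  -- for each ε ∈ (0, s], FTC gives the integral from ε to s
  have hFTC : ∀ ε ∈ Ioc (0:ℝ) s,
      ∫ y in ε..s, Real.exp (-b ^ 2 * y / 2) / Real.sqrt y = F s - F ε := by
    intro ε hε
    refine intervalIntegral.integral_eq_sub_of_hasDerivAt (fun x hx => ?_) ?_
    · rw [uIcc_of_le hε.2] at hx
      exact hFd x (lt_of_lt_of_le hε.1 hx.1)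
    · exact gauss_integrand_intervalIntegrable b hε.1.le hs.le
  have hsplit : ∀ ε ∈ Ioc (0:ℝ) s,
      ∫ y in ε..s, Real.exp (-b ^ 2 * y / 2) / Real.sqrt y
        = (∫ y in (0:ℝ)..s, Real.exp (-b ^ 2 * y / 2) / Real.sqrt y)
          - ∫ y in (0:ℝ)..ε, Real.exp (-b ^ 2 * y / 2) / Real.sqrt y := by
    intro ε hε
    rw [eq_sub_iff_add_eq]
    rw [add_comm]
    exact intervalIntegral.integral_add_adjacent_intervals
      (gauss_integrand_intervalIntegrable b le_rfl hε.1.le)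
      (gauss_integrand_intervalIntegrable b hε.1.le hs.le)
  -- limit as ε → 0⁺
  have hprim : Tendsto (fun ε => ∫ y in (0:ℝ)..ε, Real.exp (-b ^ 2 * y / 2) / Real.sqrt y)
      (nhdsWithin 0 (Ioc 0 s)) (nhds 0) := by
    have hco := intervalIntegral.continuousOn_primitive_interval'
      (b₁ := (0:ℝ)) (b₂ := s) (a := (0:ℝ)) hint (by simp [uIcc_of_le hs.le, hs.le])
    have h0 : (0:ℝ) ∈ uIcc (0:ℝ) s := by simp [uIcc_of_le hs.le, hs.le]
    have := (hco 0 h0)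
    unfold ContinuousWithinAt at this
    simp only [intervalIntegral.integral_same] at this
    exact this.mono_left (nhdsWithin_mono 0 (by rw [uIcc_of_le hs.le]; exact Ioc_subset_Icc_self))
  have hne : (nhdsWithin (0:ℝ) (Ioc 0 s)).NeBot := by
    rw [nhdsWithin_Ioc_eq_nhdsGT hs]
    infer_instance
  have hFcont : Tendsto (fun ε => F s - F ε) (nhdsWithin 0 (Ioc 0 s))
      (nhds (F s - Real.sqrt (2 * π) / c)) := by
    have hF0 : F 0 = Real.sqrt (2 * π) / c := by
      simp [hF, gaussCdf_zero]; ring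
    have : ContinuousAt F 0 := by
      apply ContinuousAt.mul continuousAt_const
      exact (gaussCdf_cont.continuousAt).comp
        ((Real.continuous_sqrt.continuousAt).const_mul c)
    rw [← hF0]
    exact (tendsto_const_nhds.sub (this.mono_left nhdsWithin_le_nhds))
  have heq : ∫ y in (0:ℝ)..s, Real.exp (-b ^ 2 * y / 2) / Real.sqrt y
      = F s - Real.sqrt (2 * π) / c := by
    have h1 : Tendsto (fun ε => ∫ y in ε..s, Real.exp (-b ^ 2 * y / 2) / Real.sqrt y)
        (nhdsWithin 0 (Ioc 0 s))
        (nhds (∫ y in (0:ℝ)..s, Real.exp (-b ^ 2 * y / 2) / Real.sqrt y)) := by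
      have := tendsto_const_nhds (α := ℝ)
        (x := ∫ y in (0:ℝ)..s, Real.exp (-b ^ 2 * y / 2) / Real.sqrt y)
        (f := nhdsWithin (0:ℝ) (Ioc 0 s)) |>.sub hprim
      rw [sub_zero] at this
      refine this.congr' ?_
      filter_upwards [self_mem_nhdsWithin] with ε hε
      exact (hsplit ε hε).symm
    have h2 : Tendsto (fun ε => ∫ y in ε..s, Real.exp (-b ^ 2 * y / 2) / Real.sqrt y)
        (nhdsWithin 0 (Ioc 0 s)) (nhds (F s - Real.sqrt (2 * π) / c)) := by
      refine hFcont.congr' ?_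
      filter_upwards [self_mem_nhdsWithin] with ε hε
      exact (hFTC ε hε).symm
    exact tendsto_nhds_unique h1 h2
  rw [heq, hF]
  field_simp

@[fun_prop] lemma gaussCdf_measurable : Measurable gaussCdf := gaussCdf_cont.measurable

lemma sqrt_tendsto_atTop : Tendsto Real.sqrt atTop atTop := by
  refine tendsto_atTop_atTop.2 fun M => ⟨M ^ 2, fun a ha => ?_⟩
  calc M ≤ |M| := le_abs_self M
    _ = Real.sqrt (M ^ 2) := (Real.sqrt_sq_eq_abs M).symm
    _ ≤ Real.sqrt a := Real.sqrt_le_sqrt ha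

lemma tendstoA (b : ℝ) : Tendsto (fun T : ℝ => Real.exp (-b ^ 2 * T / 2) / Real.sqrt T)
    atTop (nhds 0) := by
  have h0 : Tendsto (fun T : ℝ => 1 / Real.sqrt T) atTop (nhds 0) := by
    simpa [Function.comp_def] using tendsto_inv_atTop_zero.comp (sqrt_tendsto_atTop)
  refine squeeze_zero' ?_ ?_ h0
  · filter_upwards [eventually_gt_atTop (0:ℝ)] with T hT
    positivity
  · filter_upwards [eventually_gt_atTop (0:ℝ)] with T hT
    have h1 : Real.exp (-b ^ 2 * T / 2) ≤ 1 := by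
      rw [Real.exp_le_one_iff]; nlinarith [sq_nonneg b]
    gcongr

lemma tendstoQ (b : ℝ) : Tendsto (fun v : ℝ => (b / 2) * Real.sqrt (2 * π) *
    (2 * gaussCdf (b * v) - 1)) atTop (nhds (|b| * Real.sqrt (2 * π) / 2)) := by
  rcases lt_trichotomy b 0 with hb | hb | hb
  · have h1 : Tendsto (fun v : ℝ => b * v) atTop atBot :=
      tendsto_id.const_mul_atTop_of_neg hb
    have h2 := gaussCdf_tendsto_atBot.comp h1
    have h3 : Tendsto (fun v : ℝ => (b / 2) * Real.sqrt (2 * π) * (2 * gaussCdf (b * v) - 1))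
        atTop (nhds ((b / 2) * Real.sqrt (2 * π) * (2 * 0 - 1))) := by
      exact (tendsto_const_nhds.mul ((h2.const_mul 2).sub tendsto_const_nhds))
    convert h3 using 2
    rw [abs_of_neg hb]; ring
  · simp [hb]
  · have h1 : Tendsto (fun v : ℝ => b * v) atTop atTop :=
      tendsto_id.const_mul_atTop hb
    have h2 := gaussCdf_tendsto_atTop.comp h1
    have h3 : Tendsto (fun v : ℝ => (b / 2) * Real.sqrt (2 * π) * (2 * gaussCdf (b * v) - 1))
        atTop (nhds ((b / 2) * Real.sqrt (2 * π) * (2 * 1 - 1))) := by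
      exact (tendsto_const_nhds.mul ((h2.const_mul 2).sub tendsto_const_nhds))
    convert h3 using 2
    rw [abs_of_pos hb]; ring

lemma psi_decomp (b s y t : ℝ) (hy : 0 < y) (ht : y ≤ t) (hs : 0 < s) :
    psi b (s + t) y = (Real.exp (-b ^ 2 * y / 2) / (π * Real.sqrt y)) *
      (Real.exp (-b ^ 2 * (s + t - y) / 2) / Real.sqrt (s + t - y) +
        (b / 2) * Real.sqrt (2 * π) * (2 * gaussCdf (b * Real.sqrt (s + t - y)) - 1)) := by
  have hT : 0 < s + t - y := by linarith
  unfold psi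
  rw [Real.sqrt_mul hy.le, show (2 : ℝ) * π * (s + t - y) = (2 * π) * (s + t - y) by ring,
    Real.sqrt_mul (by positivity)]
  have h1 : (0:ℝ) < Real.sqrt y := Real.sqrt_pos.2 hy
  have h2 : (0:ℝ) < Real.sqrt (s + t - y) := Real.sqrt_pos.2 hT
  field_simp

lemma part1 (b s : ℝ) (hs : 0 < s) :
    Tendsto (fun t => ∫ y in (0:ℝ)..s, psi b (s + t) y) atTop
      (nhds (∫ y in (0:ℝ)..s,
        (|b| / Real.sqrt (2 * π)) * (Real.exp (-b ^ 2 * y / 2) / Real.sqrt y))) := by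
  have h2pi : Real.sqrt (2 * π) * Real.sqrt (2 * π) = 2 * π :=
    Real.mul_self_sqrt (by positivity)
  have hIoc : Set.uIoc (0:ℝ) s = Ioc 0 s := uIoc_of_le hs.le
  refine intervalIntegral.tendsto_integral_filter_of_dominated_convergence
    (bound := fun y => ((1 / Real.sqrt s + |b| * Real.sqrt (2 * π) / 2) / π) * y ^ (-(1:ℝ)/2))
    ?_ ?_ ?_ ?_
  · refine Eventually.of_forall fun t => Measurable.aestronglyMeasurable ?_
    unfold psi
    fun_prop
  · filter_upwards [eventually_ge_atTop s] with t ht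
    refine Eventually.of_forall fun y hy => ?_
    rw [hIoc] at hy
    obtain ⟨hy1, hy2⟩ := hy
    have hts : y ≤ t := hy2.trans ht
    rw [psi_decomp b s y t hy1 hts hs]
    set T := s + t - y with hTdef
    have hT : s ≤ T := by simp only [hTdef]; linarith
    have hTpos : 0 < T := lt_of_lt_of_le hs hT
    have hsy : (0:ℝ) < Real.sqrt y := Real.sqrt_pos.2 hy1
    have hss : (0:ℝ) < Real.sqrt s := Real.sqrt_pos.2 hs
    have hA : |Real.exp (-b ^ 2 * T / 2) / Real.sqrt T| ≤ 1 / Real.sqrt s := by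
      rw [abs_of_nonneg (by positivity)]
      have h1 : Real.exp (-b ^ 2 * T / 2) ≤ 1 := by
        rw [Real.exp_le_one_iff]; nlinarith [sq_nonneg b]
      calc Real.exp (-b ^ 2 * T / 2) / Real.sqrt T ≤ 1 / Real.sqrt T := by gcongr
        _ ≤ 1 / Real.sqrt s := one_div_le_one_div_of_le hss (Real.sqrt_le_sqrt hT)
    have hQ : |(b / 2) * Real.sqrt (2 * π) * (2 * gaussCdf (b * Real.sqrt T) - 1)|
        ≤ |b| * Real.sqrt (2 * π) / 2 := by
      rw [abs_mul, abs_mul]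
      have h1 : |2 * gaussCdf (b * Real.sqrt T) - 1| ≤ 1 :=
        abs_le.2 ⟨by linarith [gaussCdf_nonneg (b * Real.sqrt T)],
          by linarith [gaussCdf_le_one (b * Real.sqrt T)]⟩
      have h2 : |b / 2| = |b| / 2 := by rw [abs_div]; norm_num
      have h3 : |Real.sqrt (2 * π)| = Real.sqrt (2 * π) :=
        abs_of_nonneg (Real.sqrt_nonneg _)
      rw [h2, h3]
      calc |b| / 2 * Real.sqrt (2 * π) * |2 * gaussCdf (b * Real.sqrt T) - 1|
          ≤ |b| / 2 * Real.sqrt (2 * π) * 1 := by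
            refine mul_le_mul_of_nonneg_left h1 ?_
            positivity
        _ = |b| * Real.sqrt (2 * π) / 2 := by ring
    have hc0 : 0 ≤ Real.exp (-b ^ 2 * y / 2) / (π * Real.sqrt y) := by positivity
    have hc2 : Real.exp (-b ^ 2 * y / 2) / (π * Real.sqrt y) ≤ 1 / (π * Real.sqrt y) := by
      gcongr
      rw [Real.exp_le_one_iff]; nlinarith [sq_nonneg b]
    have hrpow : y ^ (-(1:ℝ)/2) = 1 / Real.sqrt y := by
      rw [Real.sqrt_eq_rpow, one_div, ← Real.rpow_neg hy1.le]
      norm_num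
    rw [Real.norm_eq_abs, abs_mul, hrpow]
    calc |Real.exp (-b ^ 2 * y / 2) / (π * Real.sqrt y)| *
          |Real.exp (-b ^ 2 * T / 2) / Real.sqrt T +
            (b / 2) * Real.sqrt (2 * π) * (2 * gaussCdf (b * Real.sqrt T) - 1)|
        ≤ (1 / (π * Real.sqrt y)) * (1 / Real.sqrt s + |b| * Real.sqrt (2 * π) / 2) := by
          rw [abs_of_nonneg hc0]
          refine mul_le_mul hc2 ((abs_add_le _ _).trans (add_le_add hA hQ)) (abs_nonneg _) ?_
          positivity
      _ = (1 / Real.sqrt s + |b| * Real.sqrt (2 * π) / 2) / π * (1 / Real.sqrt y) := by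
          ring
  · exact (intervalIntegral.intervalIntegrable_rpow' (by norm_num)).const_mul _
  · refine Eventually.of_forall fun y hy => ?_
    rw [hIoc] at hy
    obtain ⟨hy1, hy2⟩ := hy
    have hsy : (0:ℝ) < Real.sqrt y := Real.sqrt_pos.2 hy1
    have hTt : Tendsto (fun t : ℝ => s + t - y) atTop atTop := by
      have := tendsto_atTop_add_const_right atTop (s - y) tendsto_id
      refine this.congr fun t => by simp only [id]; ring
    have hA := (tendstoA b).comp hTt
    have hQ := (tendstoQ b).comp (sqrt_tendsto_atTop.comp hTt)
    have hlim := tendsto_const_nhds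
      (x := Real.exp (-b ^ 2 * y / 2) / (π * Real.sqrt y)) (f := atTop (α := ℝ)) |>.mul
      (hA.add hQ)
    rw [zero_add] at hlim
    have hval : Real.exp (-b ^ 2 * y / 2) / (π * Real.sqrt y) *
        (|b| * Real.sqrt (2 * π) / 2)
        = |b| / Real.sqrt (2 * π) * (Real.exp (-b ^ 2 * y / 2) / Real.sqrt y) := by
      have h2a : Real.sqrt 2 * Real.sqrt 2 = 2 := Real.mul_self_sqrt (by norm_num)
      have h2b : Real.sqrt π * Real.sqrt π = π := Real.mul_self_sqrt pi_pos.le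
      set E := Real.exp (-b ^ 2 * y / 2) with hE
      field_simp
      linear_combination (E * |b|) * (Real.sq_sqrt (by positivity : (0:ℝ) ≤ π * 2))
    rw [hval] at hlim
    refine hlim.congr' ?_
    filter_upwards [eventually_ge_atTop y] with t ht
    exact (psi_decomp b s y t hy1 ht hs).symm

theorem stmt5 (b s : ℝ) (hs : 0 < s) :
    Filter.Tendsto (fun t => ∫ y in (0 : ℝ)..s, psi b (s + t) y) Filter.atTop
      (nhds (2 * gaussCdf (|b| * Real.sqrt s) - 1)) ∧
    (|b| / Real.sqrt (2 * π)) * (∫ y in (0 : ℝ)..s, Real.exp (-b ^ 2 * y / 2) / Real.sqrt y)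
      = 2 * gaussCdf (|b| * Real.sqrt s) - 1 := by
  constructor
  · have h := part1 b s hs
    rwa [intervalIntegral.integral_const_mul, part2 b s hs] at h
  · exact part2 b s hs
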